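/- Define a norm μ on finite sets by: a node t is given M_t^{m_t} immediate successors where M_t := (2·m_t)^{m_t} and m_t is the number of previously constructed nodes, and for A ⊆ SUCC(t), μ(A) := log_{M_t}(|A|/M_t + 1). Then μ satisfies: 0 ≤ μ(A) < m_t; μ(A) = 0 iff A = ∅; μ is strictly monotone; μ is sub-additive (μ(A∪B) ≤ μ(A) + μ(B)); if |B| ≥ |A|/M_t then μ(B) > μ(A) − 1; and if |B| ≤ m_t then μ(B) < 1/m_t. -/
import Mathlib


/-- The norm of the strongly non-homogeneous forcing: with `M = (2m)^m`,
`μ(A) = log_M (|A| / M + 1)`. -/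
noncomputable def sacNorm (m : ℕ) (A : Finset ℕ) : ℝ :=
  Real.logb ((2 * m : ℝ) ^ m) ((A.card : ℝ) / ((2 * m : ℝ) ^ m) + 1)

/-- Properties of the norm `μ(A) = log_M (|A|/M + 1)` with `M = (2m)^m`, on
subsets of a successor set of size `M^m`: `0 ≤ μ(A) < m`; `μ(A) = 0` iff
`A = ∅`; strict monotonicity; sub-additivity; `|B| ≥ |A|/M` implies
`μ(B) > μ(A) − 1`; and `|B| ≤ m` implies `μ(B) < 1/m`. -/
theorem sacNorm_properties (m : ℕ) (hm : 2 ≤ m) :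
    (∀ A : Finset ℕ, A.card ≤ ((2 * m) ^ m) ^ m →
      0 ≤ sacNorm m A ∧ sacNorm m A < m) ∧
    (∀ A : Finset ℕ, sacNorm m A = 0 ↔ A = ∅) ∧
    (∀ A B : Finset ℕ, A ⊂ B → sacNorm m A < sacNorm m B) ∧
    (∀ A B : Finset ℕ, sacNorm m (A ∪ B) ≤ sacNorm m A + sacNorm m B) ∧
    (∀ A B : Finset ℕ, (A.card : ℝ) / ((2 * m : ℝ) ^ m) ≤ (B.card : ℝ) →
      sacNorm m A - 1 < sacNorm m B) ∧
    (∀ B : Finset ℕ, B.card ≤ m → sacNorm m B < 1 / (m : ℝ)) := by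
  have hmR : (2:ℝ) ≤ (m:ℝ) := by exact_mod_cast hm
  set M : ℝ := (2 * m : ℝ) ^ m with hMdef
  have h2m : (4:ℝ) ≤ 2 * m := by linarith
  have hM1 : 1 < M := one_lt_pow₀ (by linarith) (by omega)
  have hM0 : (0:ℝ) < M := zero_lt_one.trans hM1
  have hx : ∀ A : Finset ℕ, (1:ℝ) ≤ (A.card:ℝ)/M + 1 := fun A => by
    have : (0:ℝ) ≤ (A.card:ℝ)/M := by positivity
    linarith
  have hx0 : ∀ A : Finset ℕ, (0:ℝ) < (A.card:ℝ)/M + 1 := fun A =>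
    lt_of_lt_of_le one_pos (hx A)
  have key : ∀ A : Finset ℕ, sacNorm m A = Real.logb M ((A.card:ℝ)/M + 1) :=
    fun A => rfl
  refine ⟨?_, ?_, ?_, ?_, ?_, ?_⟩
  · intro A hA
    constructor
    · rw [key]
      exact Real.logb_nonneg hM1 (hx A)
    · rw [key]
      have hcard : (A.card : ℝ) ≤ M ^ m := by
        rw [hMdef, ← Nat.cast_ofNat, ← Nat.cast_mul, ← Nat.cast_pow, ← Nat.cast_pow]
        exact_mod_cast hA
      have hM2 : (2:ℝ) ≤ M := by
        calc (2:ℝ) ≤ 2 * m := by linarith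
        _ ≤ (2 * m) ^ m := le_self_pow₀ (by linarith) (by omega)
      have hlt : (A.card:ℝ)/M + 1 < M ^ m := by
        have h1 : (A.card:ℝ)/M ≤ M ^ m / M := by gcongr
        have h2 : M ^ m / M = M ^ (m-1) := by
          rw [div_eq_iff (ne_of_gt hM0), ← pow_succ]
          congr 1
          omega
        have h3 : M ^ (m-1) + 1 < M ^ m := by
          have h4 : (1:ℝ) < M ^ (m-1) := one_lt_pow₀ hM1 (by omega)
          have h5 : 2 * M ^ (m-1) ≤ M ^ m := by
            calc 2 * M ^ (m-1) ≤ M * M ^ (m-1) := by nlinarith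
            _ = M ^ m := by rw [← pow_succ']; congr 1; omega
          linarith
        rw [h2] at h1
        linarith
      calc Real.logb M ((A.card:ℝ)/M + 1) < Real.logb M (M ^ m) :=
            Real.logb_lt_logb hM1 (hx0 A) hlt
        _ = m := by rw [Real.logb_pow, Real.logb_self_eq_one hM1]; ring
  · intro A
    constructor
    · intro h
      by_contra hne
      have hc : 0 < A.card := Finset.card_pos.mpr (Finset.nonempty_iff_ne_empty.mpr hne)
      have h1 : (1:ℝ) < (A.card:ℝ)/M + 1 := by
        have : (0:ℝ) < (A.card:ℝ)/M := by positivity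
        linarith
      have := Real.logb_pos hM1 h1
      rw [key] at h
      linarith
    · intro h
      rw [key, h]
      simp
  · intro A B hAB
    rw [key, key]
    apply Real.logb_lt_logb hM1 (hx0 A)
    have h : (A.card:ℝ) < B.card := by exact_mod_cast Finset.card_lt_card hAB
    gcongr
  · intro A B
    rw [key, key, key, ← Real.logb_mul (by positivity) (by positivity)]
    apply Real.logb_le_logb_of_le hM1 (hx0 _)
    have hcard : ((A ∪ B).card : ℝ) ≤ (A.card:ℝ) + B.card := by
      exact_mod_cast Finset.card_union_le A B
    have hA0 : (0:ℝ) ≤ (A.card:ℝ)/M := by positivity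
    have hB0 : (0:ℝ) ≤ (B.card:ℝ)/M := by positivity
    have : ((A ∪ B).card:ℝ)/M ≤ (A.card:ℝ)/M + (B.card:ℝ)/M := by
      rw [← add_div]; gcongr
    nlinarith [mul_nonneg hA0 hB0]
  · intro A B hAB
    rw [key, key]
    have h1 : sacNorm m B + 1 = Real.logb M (((B.card:ℝ)/M + 1) * M) := by
      rw [Real.logb_mul (by positivity) (ne_of_gt hM0), key,
        Real.logb_self_eq_one hM1]
    have h2 : (A.card:ℝ)/M + 1 < ((B.card:ℝ)/M + 1) * M := by
      have hB0 : (0:ℝ) ≤ (B.card:ℝ) := Nat.cast_nonneg _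
      have : ((B.card:ℝ)/M + 1) * M = (B.card:ℝ) + M := by
        field_simp
      rw [this]
      linarith
    have h3 := Real.logb_lt_logb hM1 (hx0 A) h2
    rw [← h1, ← key A] at h3
    rw [← key A, ← key B]
    linarith
  · intro B hB
    rw [key]
    have hm0 : (0:ℝ) < m := by linarith
    have hxlt : (B.card:ℝ)/M + 1 < 2 * m := by
      have hbm : (B.card:ℝ) ≤ m := by exact_mod_cast hB
      have hmM : (m:ℝ) < M := by
        calc (m:ℝ) < 2 * m := by linarith
        _ ≤ (2 * m) ^ m := le_self_pow₀ (by linarith) (by omega)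
      have : (B.card:ℝ)/M < 1 := by
        rw [div_lt_one hM0]; linarith
      linarith
    have hpow : ((B.card:ℝ)/M + 1) ^ m < M := by
      rw [hMdef]
      exact pow_lt_pow_left₀ hxlt (le_of_lt (hx0 B)) (by omega)
    have h1 : (m:ℝ) * Real.logb M ((B.card:ℝ)/M + 1) < 1 := by
      have := Real.logb_lt_logb hM1 (pow_pos (hx0 B) m) hpow
      rw [Real.logb_pow, Real.logb_self_eq_one hM1] at this
      exact this
    rw [lt_div_iff₀ hm0, mul_comm]
    simpa using h1
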